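/- Let 1 ≤ j ≤ k−1 be integers and V a finite set. Every edge-minimal traversable triple (J0,E1,E2) on V of size ℓ with 1 ≤ ℓ ≤ binom(|V|,j) satisfies |E1| ≤ ℓ−1 and |E2| ≤ ℓ−1. In particular, T_{ℓ,r,b} = ∅ unless 0 ≤ r, b ≤ ℓ−1. -/

import Mathlib

open Finset Filter

/-- A subfamily `Jstar ⊆ Jfam` of `j`-sets is `Jfam`-traversable in the `k`-graph `(V, E)`:
for any two distinct `A, B ∈ Jstar` there is a sequence of edges `e_0, …, e_m ∈ E` with
`A ⊆ e_0`, `B ⊆ e_m`, such that the intersection of any two consecutive edges contains some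
`j`-set belonging to `Jfam`.  (Singletons are trivially traversable.) -/
def TravIn {V : Type*} [DecidableEq V] (Jfam E Jstar : Finset (Finset V)) : Prop :=
  ∀ A ∈ Jstar, ∀ B ∈ Jstar, A ≠ B →
    ∃ (m : ℕ) (es : Fin (m + 1) → Finset V),
      (∀ i, es i ∈ E) ∧ A ⊆ es 0 ∧ B ⊆ es (Fin.last m) ∧
      ∀ i : Fin m, ∃ I ∈ Jfam, I ⊆ es i.castSucc ∧ I ⊆ es i.succ

/-- The family `Jfam` is traversable in `(V, E)` if it is `Jfam`-traversable. -/
def Trav {V : Type*} [DecidableEq V] (Jfam E : Finset (Finset V)) : Prop :=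
  TravIn Jfam E Jfam

/-- A triple `(J0, E1, E2)` is traversable if `J0` is traversable in both the red `k`-graph
`(V, E1)` and the blue `k`-graph `(V, E2)`. -/
def TravTriple {V : Type*} [DecidableEq V] (J0 E1 E2 : Finset (Finset V)) : Prop :=
  Trav J0 E1 ∧ Trav J0 E2

/-- A triple `(J0, E1, E2)` is an edge-minimal traversable triple if it is traversable and
removing any edge from `E1` or from `E2` destroys traversability. -/
def EdgeMinTravTriple {V : Type*} [DecidableEq V] (J0 E1 E2 : Finset (Finset V)) : Prop :=
  TravTriple J0 E1 E2 ∧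
  (∀ e ∈ E1, ¬ Trav J0 (E1.erase e)) ∧
  (∀ e ∈ E2, ¬ Trav J0 (E2.erase e))

section Dev

variable {V : Type*} [DecidableEq V]
set_option linter.unusedSectionVars false

def emtAdj (J0 E : Finset (Finset V)) (e e' : Finset V) : Prop :=
  e ∈ E ∧ e' ∈ E ∧ ∃ I ∈ J0, I ⊆ e ∧ I ⊆ e'

def emtConn (J0 E : Finset (Finset V)) (A B : Finset V) : Prop :=
  ∃ f f', f ∈ E ∧ f' ∈ E ∧ A ⊆ f ∧ B ⊆ f' ∧ Relation.ReflTransGen (emtAdj J0 E) f f'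

lemma emtAdj_symm (J0 E : Finset (Finset V)) : Symmetric (emtAdj J0 E) := by
  rintro e e' ⟨h1, h2, I, hI, hIe, hIe'⟩
  exact ⟨h2, h1, I, hI, hIe', hIe⟩

lemma emtConn_symm {J0 E : Finset (Finset V)} {A B : Finset V}
    (h : emtConn J0 E A B) : emtConn J0 E B A := by
  obtain ⟨f, f', h1, h2, hA, hB, hR⟩ := h
  exact ⟨f', f, h2, h1, hB, hA, (haveI : Std.Symm (emtAdj J0 E) := ⟨emtAdj_symm J0 E⟩; Std.Symm.symm _ _ hR)⟩

lemma emtConn_mono {J0 E E' : Finset (Finset V)} (hEE : E ⊆ E') {A B : Finset V}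
    (h : emtConn J0 E A B) : emtConn J0 E' A B := by
  obtain ⟨f, f', h1, h2, hA, hB, hR⟩ := h
  refine ⟨f, f', hEE h1, hEE h2, hA, hB, Relation.ReflTransGen.mono ?_ _ _ hR⟩
  rintro x y ⟨hx, hy, I, hI, hIx, hIy⟩
  exact ⟨hEE hx, hEE hy, I, hI, hIx, hIy⟩

lemma emtConn_trans {J0 E : Finset (Finset V)} {A B C : Finset V} (hB : B ∈ J0)
    (h1 : emtConn J0 E A B) (h2 : emtConn J0 E B C) : emtConn J0 E A C := by
  obtain ⟨f, f', hf, hf', hA, hBf', hR1⟩ := h1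
  obtain ⟨g, g', hg, hg', hBg, hC, hR2⟩ := h2
  exact ⟨f, g', hf, hg', hA, hC, (hR1.tail ⟨hf', hg, B, hB, hBf', hBg⟩).trans hR2⟩

lemma walk_to_rtg {J0 E : Finset (Finset V)} :
    ∀ (m : ℕ) (es : Fin (m + 1) → Finset V), (∀ i, es i ∈ E) →
      (∀ i : Fin m, ∃ I ∈ J0, I ⊆ es i.castSucc ∧ I ⊆ es i.succ) →
      Relation.ReflTransGen (emtAdj J0 E) (es 0) (es (Fin.last m)) := by
  intro m
  induction m with
  | zero => intro es _ _; exact Relation.ReflTransGen.refl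
  | succ n ih =>
    intro es hmem hcond
    have h1 := ih (fun i => es i.castSucc) (fun i => hmem _) ?_
    · have h2 : emtAdj J0 E (es (Fin.last n).castSucc) (es (Fin.last (n+1))) := by
        obtain ⟨I, hI, hI1, hI2⟩ := hcond (Fin.last n)
        rw [Fin.succ_last] at hI2
        exact ⟨hmem _, hmem _, I, hI, hI1, hI2⟩
      simp only [Fin.castSucc_zero] at h1
      exact h1.tail h2
    · intro i
      obtain ⟨I, hI, hI1, hI2⟩ := hcond i.castSucc
      refine ⟨I, hI, hI1, ?_⟩
      exact hI2

lemma rtg_to_walk {J0 E : Finset (Finset V)} {f f' : Finset V}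
    (h : Relation.ReflTransGen (emtAdj J0 E) f f') (hf : f ∈ E) :
    ∃ (m : ℕ) (es : Fin (m + 1) → Finset V),
      (∀ i, es i ∈ E) ∧ es 0 = f ∧ es (Fin.last m) = f' ∧
      ∀ i : Fin m, ∃ I ∈ J0, I ⊆ es i.castSucc ∧ I ⊆ es i.succ := by
  induction h with
  | refl => exact ⟨0, fun _ => f, fun _ => hf, rfl, rfl, fun i => i.elim0⟩
  | @tail g f' hR hadj ih =>
    obtain ⟨m, es, hmem, h0, hlast, hcond⟩ := ih
    obtain ⟨hg, hf', I, hI, hIg, hIf'⟩ := hadj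
    refine ⟨m + 1, Fin.snoc es f', ?_, ?_, ?_, ?_⟩
    · intro i
      refine Fin.lastCases ?_ (fun j => ?_) i
      · rw [Fin.snoc_last]; exact hf'
      · rw [Fin.snoc_castSucc]; exact hmem j
    · rw [← Fin.castSucc_zero, Fin.snoc_castSucc]; exact h0
    · rw [Fin.snoc_last]
    · intro i
      refine Fin.lastCases ?_ (fun j => ?_) i
      · refine ⟨I, hI, ?_, ?_⟩
        · rw [Fin.snoc_castSucc, hlast]; exact hIg
        · rw [Fin.succ_last, Fin.snoc_last]; exact hIf'
      · obtain ⟨I', hI', h1, h2⟩ := hcond j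
        refine ⟨I', hI', ?_, ?_⟩
        · rw [Fin.snoc_castSucc]; exact h1
        · rw [Fin.succ_castSucc, Fin.snoc_castSucc]; exact h2

lemma trav_iff_conn {J0 E : Finset (Finset V)} :
    Trav J0 E ↔ ∀ A ∈ J0, ∀ B ∈ J0, A ≠ B → emtConn J0 E A B := by
  constructor
  · intro hT A hA B hB hAB
    obtain ⟨m, es, hmem, h0, hlast, hcond⟩ := hT A hA B hB hAB
    exact ⟨es 0, es (Fin.last m), hmem _, hmem _, h0, hlast, walk_to_rtg m es hmem hcond⟩
  · intro h A hA B hB hAB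
    obtain ⟨f, f', hf, hf', hAf, hBf', hR⟩ := h A hA B hB hAB
    obtain ⟨m, es, hmem, h0, hlast, hcond⟩ := rtg_to_walk hR hf
    exact ⟨m, es, hmem, h0 ▸ hAf, hlast ▸ hBf', hcond⟩

/-- Splicing out the edge `e`. -/
lemma emt_splice {J0 E : Finset (Finset V)} {e : Finset V}
    (H : ∀ I ∈ J0, ∀ I' ∈ J0, I ⊆ e → I' ⊆ e → I = I' ∨ emtConn J0 (E.erase e) I I') :
    ∀ A ∈ J0, ∀ B ∈ J0, emtConn J0 E A B → A = B ∨ emtConn J0 (E.erase e) A B := by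
  have relTrans : ∀ {A B C : Finset V}, B ∈ J0 →
      (A = B ∨ emtConn J0 (E.erase e) A B) → (B = C ∨ emtConn J0 (E.erase e) B C) →
      (A = C ∨ emtConn J0 (E.erase e) A C) := by
    rintro A B C hB (rfl | h1) (rfl | h2)
    · exact Or.inl rfl
    · exact Or.inr h2
    · exact Or.inr h1
    · exact Or.inr (emtConn_trans hB h1 h2)
  intro A hA B hB hConn
  obtain ⟨f, f', hf, hf', hAf, hBf', hR⟩ := hConn
  clear hf'
  induction hR generalizing B with
  | refl =>
    by_cases hfe : f = e
    · exact H A hA B hB (hfe ▸ hAf) (hfe ▸ hBf')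
    · exact Or.inr ⟨f, f, Finset.mem_erase.2 ⟨hfe, hf⟩, Finset.mem_erase.2 ⟨hfe, hf⟩,
        hAf, hBf', Relation.ReflTransGen.refl⟩
  | @tail g f' hR hadj ih =>
    obtain ⟨hg, hf'e, I, hI, hIg, hIf'⟩ := hadj
    have step1 : A = I ∨ emtConn J0 (E.erase e) A I := ih I hI hIg
    have step2 : I = B ∨ emtConn J0 (E.erase e) I B := by
      by_cases hfe : f' = e
      · exact H I hI B hB (hfe ▸ hIf') (hfe ▸ hBf')
      · exact Or.inr ⟨f', f', Finset.mem_erase.2 ⟨hfe, hf'e⟩, Finset.mem_erase.2 ⟨hfe, hf'e⟩,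
          hIf', hBf', Relation.ReflTransGen.refl⟩
    exact relTrans hI step1 step2

def emtSetoid (J0 F : Finset (Finset V)) : Setoid {A // A ∈ J0} :=
  ⟨fun a b => a.1 = b.1 ∨ emtConn J0 F a.1 b.1, by
    refine ⟨fun a => Or.inl rfl, ?_, ?_⟩
    · rintro a b (h | h)
      · exact Or.inl h.symm
      · exact Or.inr (emtConn_symm h)
    · rintro a b c (h | h) (h' | h')
      · exact Or.inl (h.trans h')
      · exact Or.inr (h ▸ h')
      · exact Or.inr (h' ▸ h)
      · exact Or.inr (emtConn_trans b.2 h h')⟩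

noncomputable def emtC (J0 F : Finset (Finset V)) : ℕ :=
  Nat.card (Quotient (emtSetoid J0 F))

lemma emtC_le (J0 F : Finset (Finset V)) : emtC J0 F ≤ J0.card := by
  rw [emtC, ← Nat.card_eq_finsetCard J0]
  exact Nat.card_le_card_of_surjective (Quotient.mk _) Quotient.mk_surjective

lemma emtC_pos (J0 F : Finset (Finset V)) (hne : J0.Nonempty) : 1 ≤ emtC J0 F := by
  obtain ⟨A, hA⟩ := hne
  haveI : Nonempty (Quotient (emtSetoid J0 F)) := ⟨Quotient.mk _ ⟨A, hA⟩⟩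
  exact Nat.card_pos

lemma emtC_lt {J0 F F' : Finset (Finset V)} (hFF : F ⊆ F')
    {A B : Finset V} (hA : A ∈ J0) (hB : B ∈ J0)
    (hconn : emtConn J0 F' A B) (hnab : A ≠ B) (hnconn : ¬ emtConn J0 F A B) :
    emtC J0 F' < emtC J0 F := by
  classical
  haveI i1 : Fintype (Quotient (emtSetoid J0 F)) := Fintype.ofFinite _
  haveI i2 : Fintype (Quotient (emtSetoid J0 F')) := Fintype.ofFinite _
  rw [emtC, emtC, Nat.card_eq_fintype_card, Nat.card_eq_fintype_card]
  have hmono : ∀ a b : {A // A ∈ J0}, (emtSetoid J0 F).r a b → (emtSetoid J0 F').r a b := by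
    rintro a b (h | h)
    · exact Or.inl h
    · exact Or.inr (emtConn_mono hFF h)
  refine Fintype.card_lt_of_surjective_not_injective
    (Quotient.map' id hmono) ?_ ?_
  · intro q
    refine Quotient.inductionOn q (fun a => ⟨Quotient.mk _ a, rfl⟩)
  · intro hinj
    have : Quotient.map' id hmono (Quotient.mk _ ⟨A, hA⟩) =
        Quotient.map' id hmono (Quotient.mk _ ⟨B, hB⟩) := by
      apply Quotient.sound
      exact Or.inr hconn
    have := hinj this
    rw [Quotient.eq] at this
    rcases this with h | h
    · exact hnab h
    · exact hnconn h

/-- Key lemma: an edge-minimal traversable pair has at most `|J0| - 1` edges. -/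
lemma emt_key {J0 E : Finset (Finset V)} (hT : Trav J0 E)
    (hmin : ∀ e ∈ E, ¬ Trav J0 (E.erase e)) (hne : J0.Nonempty) :
    E.card + 1 ≤ J0.card := by
  have descent : ∀ n : ℕ, ∀ F : Finset (Finset V), F ⊆ E → (E \ F).card = n →
      emtC J0 E + n ≤ emtC J0 F := by
    intro n
    induction n with
    | zero =>
      intro F hFE h0
      have : F = E := Finset.Subset.antisymm hFE (fun x hx => by
        by_contra hxF
        exact absurd (Finset.card_eq_zero.1 h0 ▸ Finset.mem_sdiff.2 ⟨hx, hxF⟩)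
          (Finset.notMem_empty x))
      rw [this]; omega
    | succ n ih =>
      intro F hFE hcard
      have hnonempty : (E \ F).Nonempty := by
        rw [← Finset.card_pos, hcard]; omega
      obtain ⟨e, he⟩ := hnonempty
      obtain ⟨heE, heF⟩ := Finset.mem_sdiff.1 he
      set F' := insert e F with hF'
      have hF'E : F' ⊆ E := Finset.insert_subset heE hFE
      have hsd : (E \ F').card = n := by
        rw [hF', Finset.sdiff_insert]
        rw [Finset.card_erase_of_mem (Finset.mem_sdiff.2 ⟨heE, heF⟩), hcard]
        omega
      have hstep : emtC J0 F' < emtC J0 F := by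
        by_contra hle
        -- then every pair connected in F' is connected in F (or equal)
        have hno : ∀ A ∈ J0, ∀ B ∈ J0, emtConn J0 F' A B → A = B ∨ emtConn J0 F A B := by
          intro A hA B hB hconn
          by_contra hcon
          push_neg at hcon
          exact hle (emtC_lt (Finset.subset_insert e F) hA hB hconn hcon.1 hcon.2)
        -- splice hypothesis
        have H : ∀ I ∈ J0, ∀ I' ∈ J0, I ⊆ e → I' ⊆ e →
            I = I' ∨ emtConn J0 (E.erase e) I I' := by
          intro I hI I' hI' hIe hI'e
          have hconn' : emtConn J0 F' I I' :=
            ⟨e, e, Finset.mem_insert_self e F, Finset.mem_insert_self e F,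
              hIe, hI'e, Relation.ReflTransGen.refl⟩
          rcases hno I hI I' hI' hconn' with h | h
          · exact Or.inl h
          · refine Or.inr (emtConn_mono (fun x hx => Finset.mem_erase.2
              ⟨fun hxe => heF (by rw [← hxe]; exact hx), hFE hx⟩) h)
        have hTrav' : Trav J0 (E.erase e) := by
          rw [trav_iff_conn]
          intro A hA B hB hAB
          have hconnE : emtConn J0 E A B := (trav_iff_conn.1 hT) A hA B hB hAB
          rcases emt_splice H A hA B hB hconnE with h | h
          · exact absurd h hAB
          · exact h
        exact hmin e heE hTrav'
      have := ih F' hF'E hsd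
      omega
  have h0 : (E \ ∅).card = E.card := by rw [Finset.sdiff_empty]
  have := descent E.card ∅ (Finset.empty_subset E) h0
  have h1 := emtC_pos J0 E hne
  have h2 := emtC_le J0 (∅ : Finset (Finset V))
  omega

end Dev

/-- **Claim.** Every edge-minimal traversable triple `(J0, E1, E2)` of size
`1 ≤ ℓ ≤ binom(|V|,j)` contains at most `ℓ − 1` edges of each colour; in particular,
`T_{ℓ,r,b} = ∅` unless `0 ≤ r, b ≤ ℓ − 1`. -/
theorem edgeMin_triple_card_le (k j : ℕ) (hj : 1 ≤ j) (hjk : j ≤ k - 1)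
    (V : Type*) [DecidableEq V] [Fintype V]
    (J0 E1 E2 : Finset (Finset V))
    (hJ0 : J0 ⊆ (Finset.univ : Finset V).powersetCard j)
    (hE1 : E1 ⊆ (Finset.univ : Finset V).powersetCard k)
    (hE2 : E2 ⊆ (Finset.univ : Finset V).powersetCard k)
    (hmin : EdgeMinTravTriple J0 E1 E2)
    (ℓ : ℕ) (hcard : J0.card = ℓ)
    (hℓ1 : 1 ≤ ℓ) (hℓ2 : ℓ ≤ (Fintype.card V).choose j) :
    E1.card ≤ ℓ - 1 ∧ E2.card ≤ ℓ - 1 := by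
  obtain ⟨⟨hT1, hT2⟩, hm1, hm2⟩ := hmin
  have hne : J0.Nonempty := by
    rw [← Finset.card_pos, hcard]; omega
  have k1 := emt_key hT1 hm1 hne
  have k2 := emt_key hT2 hm2 hne
  rw [hcard] at k1 k2
  omega
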